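/- arXiv:1308.5334 — 2 statements merged into one kernel-verified Lean document; each statement's English description precedes it below -/
import Mathlib

section
/- No ε-semantics can be an over-approximation of the standard semantics: for any ε > 0 and n ≥ 1, there is no function f mapping subsets of ℝⁿ to subsets of ℝⁿ such that for every set S: (i) S ⊆ f(S), (ii) f(S) ∩ f(Sᶜ) = ∅, and (iii) f(S) is either empty or contains an open ball of radius ε. -/
theorem no_over_approx_eps_semantics (n : ℕ) (hn : 1 ≤ n) (ε : ℝ) (hε : 0 < ε) :
    ¬ ∃ f : Set (EuclideanSpace ℝ (Fin n)) → Set (EuclideanSpace ℝ (Fin n)),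
      ∀ S : Set (EuclideanSpace ℝ (Fin n)),
        S ⊆ f S ∧ f S ∩ f Sᶜ = ∅ ∧
          (f S = ∅ ∨ ∃ p, Metric.ball p ε ⊆ f S) := by
  rintro ⟨f, hf⟩
  -- f S = S for all S
  have hfix : ∀ S, f S = S := by
    intro S
    apply subset_antisymm _ (hf S).1
    intro x hx
    by_contra hxS
    have hx' : x ∈ f Sᶜ := (hf Sᶜ).1 hxS
    have h := (hf S).2.1
    have : x ∈ f S ∩ f Sᶜ := ⟨hx, hx'⟩
    rw [h] at this
    exact this
  haveI : Nontrivial (EuclideanSpace ℝ (Fin n)) := by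
    haveI : Nonempty (Fin n) := ⟨⟨0, hn⟩⟩
    infer_instance
  obtain h | ⟨p, hball⟩ := (hf {0}).2.2
  · rw [hfix] at h
    exact Set.singleton_ne_empty 0 h
  · rw [hfix] at hball
    obtain ⟨y, hy⟩ := exists_ne (0 : EuclideanSpace ℝ (Fin n))
    have hny : (0:ℝ) < ‖y‖ := norm_pos_iff.mpr hy
    set r : EuclideanSpace ℝ (Fin n) := p + (ε / (2 * ‖y‖)) • y with hr
    have hrball : r ∈ Metric.ball p ε := by
      rw [Metric.mem_ball, dist_eq_norm, hr]
      simp only [add_sub_cancel_left, norm_smul, Real.norm_eq_abs]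
      rw [abs_of_pos (by positivity)]
      rw [div_mul_eq_mul_div, mul_comm, mul_div_assoc]
      calc ‖y‖ * (ε / (2 * ‖y‖)) = ε / 2 := by field_simp
        _ < ε := by linarith
    have hrp : r ≠ p := by
      rw [hr]
      intro h
      have : (ε / (2 * ‖y‖)) • y = 0 := by
        have := congrArg (· - p) h
        simpa [add_sub_cancel_left] using this
      rcases smul_eq_zero.mp this with h1 | h1
      · have : ε / (2 * ‖y‖) > 0 := by positivity
        linarith
      · exact hy h1
    have h1 := hball (Metric.mem_ball_self hε)
    have h2 := hball hrball
    simp only [Set.mem_singleton_iff] at h1 h2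
    exact hrp (h2.trans h1.symm)
end

section
/- Alternation normal form for traces: let c and d be binary relations on a type α, and suppose c is reflexive and transitive. Then for all x, y, the reflexive-transitive closure of (c ∪ d) relates x to y if and only if there exists z such that the reflexive-transitive closure of the composed relation (a ↦ b iff ∃ m, c a m ∧ d m b) relates x to z, and c z y. -/
theorem alternation_normal_form {α : Type*} (c d : α → α → Prop)
    (hrefl : ∀ a, c a a) (htrans : ∀ a b e, c a b → c b e → c a e) :
    ∀ x y : α,
      Relation.ReflTransGen (fun a b => c a b ∨ d a b) x y ↔
        ∃ z, Relation.ReflTransGen (fun a b => ∃ m, c a m ∧ d m b) x z ∧ c z y := by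
  intro x y
  constructor
  · intro h
    induction h with
    | refl => exact ⟨x, Relation.ReflTransGen.refl, hrefl x⟩
    | tail _ hstep ih =>
      obtain ⟨z, hz, hc⟩ := ih
      rcases hstep with hcb | hdb
      · exact ⟨z, hz, htrans _ _ _ hc hcb⟩
      · exact ⟨_, hz.tail ⟨_, hc, hdb⟩, hrefl _⟩
  · rintro ⟨z, hz, hc⟩
    refine Relation.ReflTransGen.tail ?_ (Or.inl hc)
    clear hc
    induction hz with
    | refl => exact Relation.ReflTransGen.refl
    | tail _ hstep ih =>
      obtain ⟨m, hcm, hdm⟩ := hstep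
      exact (ih.tail (Or.inl hcm)).tail (Or.inr hdm)
end
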